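/- arXiv:2404.13029 — 3 statements merged into one kernel-verified Lean document; each statement's English description precedes it below -/
import Mathlib

section
/- Let b₀ > 0 and C₁, C₂ ∈ ℝ with 2b₀²C₂ ≥ C₁². Define Θ^{02}(l) = C₁/(b₀² + l²) and Θ^{01}(l) = √(2C₂(b₀² + l²) - C₁²)/√(b₀² + l²). Then these functions satisfy the coupled equations Θ^{01}·∂_l Θ^{01} = -(Θ^{02})²·Γ¹_{22} and ∂_l Θ^{02} = -2 Θ^{02}·Γ²_{12}, where Γ¹_{22} = -l and Γ²_{12} = l/(b₀² + l²). -/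
open Real

theorem stmt_8 (b₀ C₁ C₂ : ℝ) (hb : 0 < b₀) (hC : C₁ ^ 2 ≤ 2 * b₀ ^ 2 * C₂)
    (Θ02 Θ01 : ℝ → ℝ)
    (hΘ02 : Θ02 = fun l => C₁ / (b₀ ^ 2 + l ^ 2))
    (hΘ01 : Θ01 = fun l =>
      Real.sqrt (2 * C₂ * (b₀ ^ 2 + l ^ 2) - C₁ ^ 2) / Real.sqrt (b₀ ^ 2 + l ^ 2)) :
    (∀ l : ℝ, Θ01 l * deriv Θ01 l = -(Θ02 l) ^ 2 * (-l)) ∧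
    (∀ l : ℝ, HasDerivAt Θ02 (-2 * Θ02 l * (l / (b₀ ^ 2 + l ^ 2))) l) := by
  have hb2 : 0 < b₀ ^ 2 := by positivity
  have hC₂ : 0 ≤ C₂ := by nlinarith [sq_nonneg C₁]
  constructor
  · intro l
    have hg : 0 < b₀ ^ 2 + l ^ 2 := by positivity
    have hf : 0 ≤ 2 * C₂ * (b₀ ^ 2 + l ^ 2) - C₁ ^ 2 := by nlinarith [sq_nonneg l]
    rcases eq_or_lt_of_le hf with hf0 | hfpos
    · -- degenerate case: the radicand vanishes at l
      have h1 : Θ01 l = 0 := by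
        rw [hΘ01]; simp [← hf0]
      have hcl : C₂ * l ^ 2 = 0 := by nlinarith [sq_nonneg l]
      rcases mul_eq_zero.mp hcl with hc0 | hl0
      · have hc1 : C₁ = 0 := by nlinarith [sq_nonneg C₁]
        rw [h1, hΘ02]; simp [hc1]
      · have hl : l = 0 := by
          have := pow_eq_zero_iff (n := 2) (by norm_num) |>.mp hl0
          exact this
        rw [h1, hl]; simp
    · -- nondegenerate case: differentiate
      set s := Real.sqrt (2 * C₂ * (b₀ ^ 2 + l ^ 2) - C₁ ^ 2) with hs_def
      set t := Real.sqrt (b₀ ^ 2 + l ^ 2) with ht_def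
      have hs : 0 < s := Real.sqrt_pos.mpr hfpos
      have ht : 0 < t := Real.sqrt_pos.mpr hg
      have hs2 : s ^ 2 = 2 * C₂ * (b₀ ^ 2 + l ^ 2) - C₁ ^ 2 := Real.sq_sqrt hfpos.le
      have ht2 : t ^ 2 = b₀ ^ 2 + l ^ 2 := Real.sq_sqrt hg.le
      have hfd : HasDerivAt (fun l : ℝ => 2 * C₂ * (b₀ ^ 2 + l ^ 2) - C₁ ^ 2)
          (2 * C₂ * (2 * l)) l := by
        have h := ((hasDerivAt_pow 2 l).const_add (b₀ ^ 2)).const_mul (2 * C₂)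
        simpa using h.sub_const (C₁ ^ 2)
      have hgd : HasDerivAt (fun l : ℝ => b₀ ^ 2 + l ^ 2) (2 * l) l := by
        simpa using (hasDerivAt_pow 2 l).const_add (b₀ ^ 2)
      have hsf := hfd.sqrt (ne_of_gt hfpos)
      have hsg := hgd.sqrt (ne_of_gt hg)
      have hD := hsf.div hsg (ne_of_gt ht)
      have hD' : HasDerivAt Θ01 _ l := hΘ01 ▸ (show HasDerivAt (fun y => Real.sqrt (2 * C₂ * (b₀ ^ 2 + y ^ 2) - C₁ ^ 2) / Real.sqrt (b₀ ^ 2 + y ^ 2)) _ l from hD)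
      rw [hD'.deriv, hΘ01, hΘ02]
      simp only [← hs_def, ← ht_def]
      have step1 : s / t * ((2 * C₂ * (2 * l) / (2 * s) * t - s * (2 * l / (2 * t))) / t ^ 2)
          = (2 * C₂ * l * t ^ 2 - s ^ 2 * l) / (t ^ 2) ^ 2 := by
        field_simp
      rw [step1, hs2, ht2]
      field_simp
      ring
  · intro l
    have hg : 0 < b₀ ^ 2 + l ^ 2 := by positivity
    have hgd : HasDerivAt (fun l : ℝ => b₀ ^ 2 + l ^ 2) (2 * l) l := by
      simpa using (hasDerivAt_pow 2 l).const_add (b₀ ^ 2)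
    have h := (hasDerivAt_const l C₁).div hgd (ne_of_gt hg)
    have he : (0 * (b₀ ^ 2 + l ^ 2) - C₁ * (2 * l)) / (b₀ ^ 2 + l ^ 2) ^ 2
        = -2 * ((fun l => C₁ / (b₀ ^ 2 + l ^ 2)) l) * (l / (b₀ ^ 2 + l ^ 2)) := by
      simp only
      field_simp
      ring
    rw [hΘ02]
    exact he ▸ h
end

section
/- For the Schwarzschild metric with α(r) = ½ log(1 - 2M/r), the function f(r) = (C/r)·√(1 - 2M/r) on (2M, ∞) satisfies f'(r) = (α'(r) - 1/r)·f(r), and its absolute value attains its unique maximum on (2M,∞) at r = 3M. -/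
open Real Set

theorem stmt_10 (M C : ℝ) (hM : 0 < M) (hC : C ≠ 0)
    (f : ℝ → ℝ) (hf : f = fun r => C / r * Real.sqrt (1 - 2 * M / r)) :
    (∀ r ∈ Ioi (2 * M),
      HasDerivAt f (((M / r ^ 2) / (1 - 2 * M / r) - 1 / r) * f r) r) ∧
    StrictMonoOn (fun r => |f r|) (Ioc (2 * M) (3 * M)) ∧
    StrictAntiOn (fun r => |f r|) (Ici (3 * M)) ∧
    (∀ r ∈ Ioi (2 * M), r ≠ 3 * M → |f r| < |f (3 * M)|) := by
  have h2M : (0:ℝ) < 2 * M := by linarith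
  -- auxiliary function
  set h : ℝ → ℝ := fun r => 1 / r ^ 2 - 2 * M / r ^ 3 with hh
  have hpos : ∀ r, 2 * M < r → 0 < h r := by
    intro r hr
    have hr0 : 0 < r := lt_trans h2M hr
    have : h r = (r - 2 * M) / r ^ 3 := by
      simp only [hh]; field_simp
    rw [this]
    exact div_pos (by linarith) (by positivity)
  have hupos : ∀ r, 2 * M < r → 0 < 1 - 2 * M / r := by
    intro r hr
    have hr0 : 0 < r := lt_trans h2M hr
    rw [sub_pos, div_lt_one hr0]; exact hr
  have hderiv : ∀ x : ℝ, x ≠ 0 → HasDerivAt h ((6 * M - 2 * x) / x ^ 4) x := by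
    intro x hx
    have h2 : HasDerivAt (fun r : ℝ => (r ^ 2)⁻¹) (-(2 * x ^ 1) / (x ^ 2) ^ 2) x :=
      (hasDerivAt_pow 2 x).inv (pow_ne_zero 2 hx)
    have h3 : HasDerivAt (fun r : ℝ => 2 * M * (r ^ 3)⁻¹)
        (2 * M * (-(3 * x ^ 2) / (x ^ 3) ^ 2)) x :=
      ((hasDerivAt_pow 3 x).inv (pow_ne_zero 3 hx)).const_mul (2 * M)
    have := h2.sub h3
    have heq : (fun r : ℝ => (r ^ 2)⁻¹ - 2 * M * (r ^ 3)⁻¹) = h := by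
      funext r; simp only [hh]; ring
    rw [show ((fun r : ℝ => (r ^ 2)⁻¹) - fun r => 2 * M * (r ^ 3)⁻¹) = h from heq] at this
    refine this.congr_deriv ?_
    field_simp
    ring
  have hcont1 : ContinuousOn h (Ioc (2 * M) (3 * M)) := by
    intro x hx
    exact (hderiv x (by have := lt_trans h2M hx.1; linarith)).continuousAt.continuousWithinAt
  have hcont2 : ContinuousOn h (Ici (3 * M)) := by
    intro x hx
    have : 2 * M < x := lt_of_lt_of_le (by linarith) hx
    exact (hderiv x (by have := lt_trans h2M this; linarith)).continuousAt.continuousWithinAt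
  have hmono : StrictMonoOn h (Ioc (2 * M) (3 * M)) := by
    apply strictMonoOn_of_deriv_pos (convex_Ioc _ _) hcont1
    intro x hx
    rw [interior_Ioc] at hx
    have hx0 : 0 < x := lt_trans h2M hx.1
    rw [(hderiv x hx0.ne').deriv]
    exact div_pos (by linarith [hx.2]) (by positivity)
  have hanti : StrictAntiOn h (Ici (3 * M)) := by
    apply strictAntiOn_of_deriv_neg (convex_Ici _) hcont2
    intro x hx
    rw [interior_Ici, mem_Ioi] at hx
    have hx0 : 0 < x := by linarith
    rw [(hderiv x hx0.ne').deriv]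
    exact div_neg_of_neg_of_pos (by linarith) (by positivity)
  have habs : ∀ r, 2 * M < r → |f r| = |C| * Real.sqrt (h r) := by
    intro r hr
    have hr0 : 0 < r := lt_trans h2M hr
    have h1 : h r = (1 - 2 * M / r) / r ^ 2 := by
      simp only [hh]; field_simp
    rw [hf]
    simp only
    rw [h1, Real.sqrt_div' _ (by positivity), Real.sqrt_sq hr0.le]
    rw [abs_mul, abs_div, abs_of_pos hr0, abs_of_nonneg (Real.sqrt_nonneg _)]
    ring
  refine ⟨?_, ?_, ?_, ?_⟩
  · -- derivative
    intro r hr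
    rw [mem_Ioi] at hr
    have hr0 : 0 < r := lt_trans h2M hr
    have hu : 0 < 1 - 2 * M / r := hupos r hr
    have hs0 : Real.sqrt (1 - 2 * M / r) ≠ 0 := by positivity
    have hinv : HasDerivAt (fun x : ℝ => 1 - 2 * M / x) (2 * M / r ^ 2) r := by
      have h1 : HasDerivAt (fun x : ℝ => 2 * M * x⁻¹) (2 * M * -(r ^ 2)⁻¹) r :=
        (hasDerivAt_inv hr0.ne').const_mul (2 * M)
      have h2 : HasDerivAt (fun x : ℝ => (1:ℝ) - 2 * M * x⁻¹) _ r := (hasDerivAt_const r (1:ℝ)).sub h1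
      simp only [div_eq_mul_inv]
      convert h2 using 1
      field_simp
      ring
    have hsq : HasDerivAt (fun x : ℝ => Real.sqrt (1 - 2 * M / x))
        (2 * M / r ^ 2 / (2 * Real.sqrt (1 - 2 * M / r))) r :=
      hinv.sqrt (by simpa using hu.ne')
    have hcr : HasDerivAt (fun x : ℝ => C / x) (C * -(r ^ 2)⁻¹) r := by
      have h1 : HasDerivAt (fun x : ℝ => C * x⁻¹) (C * -(r ^ 2)⁻¹) r :=
        (hasDerivAt_inv hr0.ne').const_mul C
      simp only [div_eq_mul_inv]
      exact h1
    have hmul : HasDerivAt (fun x : ℝ => C / x * Real.sqrt (1 - 2 * M / x)) _ r := hcr.mul hsq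
    rw [hf]
    simp only
    convert hmul using 1
    set s := Real.sqrt (1 - 2 * M / r) with hsdef
    have hss : s * s = 1 - 2 * M / r := Real.mul_self_sqrt hu.le
    rw [← hss]
    field_simp
    ring
  · intro x hx y hy hxy
    simp only
    rw [habs x hx.1, habs y hy.1]
    exact mul_lt_mul_of_pos_left
      (Real.sqrt_lt_sqrt (hpos x hx.1).le (hmono hx hy hxy)) (abs_pos.2 hC)
  · intro x hx y hy hxy
    have hx2 : 2 * M < x := lt_of_lt_of_le (by linarith) hx
    have hy2 : 2 * M < y := lt_of_lt_of_le (by linarith) hy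
    simp only
    rw [habs x hx2, habs y hy2]
    exact mul_lt_mul_of_pos_left
      (Real.sqrt_lt_sqrt (hpos y hy2).le (hanti hx hy hxy)) (abs_pos.2 hC)
  · intro r hr hne
    rw [mem_Ioi] at hr
    rcases lt_or_gt_of_ne hne with hlt | hgt
    · have h3 : 2 * M < 3 * M := by linarith
      rw [habs r hr, habs (3*M) h3]
      exact mul_lt_mul_of_pos_left
        (Real.sqrt_lt_sqrt (hpos r hr).le
          (hmono ⟨hr, hlt.le⟩ ⟨h3, le_refl _⟩ hlt)) (abs_pos.2 hC)
    · have h3 : 2 * M < 3 * M := by linarith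
      rw [habs r hr, habs (3*M) h3]
      exact mul_lt_mul_of_pos_left
        (Real.sqrt_lt_sqrt (hpos r hr).le
          (hanti self_mem_Ici hgt.le hgt)) (abs_pos.2 hC)
end

section
/- For the Morris–Thorne wormhole metric g = -dt² + dl² + (b₀²+l²)dΩ², any antisymmetric tensor Θ satisfying R^α_{λγδ}Θ^{λβ} + R^β_{λγδ}Θ^{αλ} = 0 (curvature obstruction from covariant constancy) must have Θ^{12} = Θ^{13} = Θ^{23} = 0; in particular Θ cannot be invertible as a 4×4 matrix at any point. -/
open Real Matrix

/-- Riemann block: a pair (i,j) with value v, filled in with the symmetries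
R_{ijij} = R_{jiji} = v, R_{ijji} = R_{jiij} = -v. -/
def riemBlk (i j : Fin 4) (v : ℝ) : Fin 4 → Fin 4 → Fin 4 → Fin 4 → ℝ :=
  fun a b c d =>
    if a = i ∧ b = j ∧ c = i ∧ d = j then v
    else if a = j ∧ b = i ∧ c = j ∧ d = i then v
    else if a = i ∧ b = j ∧ c = j ∧ d = i then -v
    else if a = j ∧ b = i ∧ c = i ∧ d = j then -v
    else 0

/-- Riemann tensor (all indices lowered) of the Morris–Thorne wormhole:
R_{1212} = -b₀²/(b₀²+l²), R_{1313} = -b₀²sin²ϑ/(b₀²+l²), R_{2323} = b₀²sin²ϑ. -/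
noncomputable def whRiem (b₀ l ϑ : ℝ) : Fin 4 → Fin 4 → Fin 4 → Fin 4 → ℝ :=
  fun a b c d =>
    riemBlk 1 2 (-(b₀ ^ 2 / (b₀ ^ 2 + l ^ 2))) a b c d
    + riemBlk 1 3 (-(b₀ ^ 2 * Real.sin ϑ ^ 2 / (b₀ ^ 2 + l ^ 2))) a b c d
    + riemBlk 2 3 (b₀ ^ 2 * Real.sin ϑ ^ 2) a b c d

/-- Inverse metric of g = -dt² + dl² + (b₀²+l²)(dϑ² + sin²ϑ dφ²). -/
noncomputable def whGinv (b₀ l ϑ : ℝ) : Matrix (Fin 4) (Fin 4) ℝ :=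
  Matrix.diagonal ![-1, 1, 1 / (b₀ ^ 2 + l ^ 2),
    1 / ((b₀ ^ 2 + l ^ 2) * Real.sin ϑ ^ 2)]

/-- Riemann tensor with the first index raised, R^α_{λγδ}. -/
noncomputable def whRiemMix (b₀ l ϑ : ℝ) (α lam γ δ : Fin 4) : ℝ :=
  ∑ μ, whGinv b₀ l ϑ α μ * whRiem b₀ l ϑ μ lam γ δ

theorem stmt_17 (b₀ l ϑ : ℝ) (hb : 0 < b₀) (hϑ : ϑ ∈ Set.Ioo 0 π)
    (Θ : Matrix (Fin 4) (Fin 4) ℝ) (hanti : Θᵀ = -Θ)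
    (hcurv : ∀ α β γ δ : Fin 4,
      ∑ lam, whRiemMix b₀ l ϑ α lam γ δ * Θ lam β
        + ∑ lam, whRiemMix b₀ l ϑ β lam γ δ * Θ α lam = 0) :
    Θ 1 2 = 0 ∧ Θ 1 3 = 0 ∧ Θ 2 3 = 0 ∧ ¬ IsUnit Θ.det := by
  have hden : b₀ ^ 2 + l ^ 2 > 0 := by positivity
  have hden' : b₀ ^ 2 + l ^ 2 ≠ 0 := ne_of_gt hden
  have hs : Real.sin ϑ ≠ 0 := ne_of_gt (Real.sin_pos_of_pos_of_lt_pi hϑ.1 hϑ.2)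
  have hb' : b₀ ≠ 0 := ne_of_gt hb
  have ha : ∀ i j, Θ i j = - Θ j i := by
    intro i j
    have := congrFun (congrFun hanti j) i
    simpa [Matrix.transpose_apply] using this
  have h1 := hcurv 1 3 1 2
  have h2 := hcurv 2 1 2 3
  have h3 := hcurv 3 1 2 3
  simp (config := { decide := true }) only [whRiemMix, whRiem, whGinv, riemBlk,
    Fin.sum_univ_four, Matrix.diagonal_apply, Matrix.cons_val_zero,
    Matrix.cons_val_one, Matrix.head_cons, if_true, if_false] at h1 h2 h3
  norm_num at h1 h2 h3
  have e23 : Θ 2 3 = 0 := by tauto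
  have e31 : Θ 3 1 = 0 := by simpa [hden', hs, hb'] using h2
  have e21 : Θ 2 1 = 0 := by simpa [hden', hs, hb'] using h3
  have e12 : Θ 1 2 = 0 := by rw [ha 1 2, e21, neg_zero]
  have e13 : Θ 1 3 = 0 := by rw [ha 1 3, e31, neg_zero]
  refine ⟨e12, e13, e23, ?_⟩
  have e32 : Θ 3 2 = 0 := by rw [ha 3 2, e23, neg_zero]
  have e11 : Θ 1 1 = 0 := by have := ha 1 1; linarith
  have e22 : Θ 2 2 = 0 := by have := ha 2 2; linarith
  have e33 : Θ 3 3 = 0 := by have := ha 3 3; linarith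
  have hdet : Θ.det = 0 := by
    simp only [Matrix.det_succ_row_zero, Fin.sum_univ_succ, Matrix.submatrix_apply,
      Fin.succ_zero_eq_one, Fin.succ_one_eq_two, Matrix.det_fin_one, Fin.sum_univ_zero]
    simp (config := { decide := true }) only [Fin.succAbove, Fin.castSucc, Fin.succ,
      Fin.castAdd, Fin.castLE, if_true, if_false]
    have m2 : (⟨2, by omega⟩ : Fin 4) = 2 := rfl
    have m3 : (⟨3, by omega⟩ : Fin 4) = 3 := rfl
    norm_num [m2, m3, e12, e13, e23, e21, e31, e32, e11, e22, e33]
  rw [hdet]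
  exact not_isUnit_zero
end
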